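/- In the LDA setting, the Youden-optimal threshold is θ_Youden = 0; that is, θ ↦ TPR(θ) − FPR(θ) attains its maximum at θ = 0. -/

import Mathlib

open Matrix MeasureTheory Real Set

/-- Standard normal CDF. -/
noncomputable def stdCDF (t : ℝ) : ℝ :=
  ∫ s in Set.Iic t, Real.exp (-s ^ 2 / 2) / Real.sqrt (2 * Real.pi)

/-- Standard normal density. -/
noncomputable def stdPDF (t : ℝ) : ℝ :=
  Real.exp (-t ^ 2 / 2) / Real.sqrt (2 * Real.pi)

/-- Inverse of the standard normal CDF (on (0,1)). -/
noncomputable def stdCDFInv : ℝ → ℝ := Function.invFun stdCDF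

/-- Euclidean norm of a vector. -/
noncomputable def vnorm {n : ℕ} (v : Fin n → ℝ) : ℝ := Real.sqrt (v ⬝ᵥ v)

/-- Density of the multivariate normal N(μ, Σ). -/
noncomputable def mvNormalPDF {n : ℕ} (μ : Fin n → ℝ) (S : Matrix (Fin n) (Fin n) ℝ)
    (x : Fin n → ℝ) : ℝ :=
  (2 * Real.pi) ^ (-(n : ℝ) / 2) * S.det ^ (-(1 : ℝ) / 2) *
    Real.exp (-(1 / 2) * ((x - μ) ⬝ᵥ S⁻¹.mulVec (x - μ)))

/-- Entrywise square root of a diagonal matrix. -/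
noncomputable def sqrtD {n : ℕ} (L : Matrix (Fin n) (Fin n) ℝ) : Matrix (Fin n) (Fin n) ℝ :=
  Matrix.diagonal (fun i => Real.sqrt (L i i))

lemma stdPDF_integrable : MeasureTheory.Integrable stdPDF := by
  have h : stdPDF = fun x : ℝ => Real.exp (-(1/2) * x ^ 2) / Real.sqrt (2 * Real.pi) := by
    funext x; unfold stdPDF; ring_nf
  rw [h]
  exact (integrable_exp_neg_mul_sq (by norm_num : (0:ℝ) < 1/2)).div_const _

lemma stdCDF_sub (a b : ℝ) : stdCDF b - stdCDF a = ∫ x in a..b, stdPDF x := by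
  unfold stdCDF stdPDF
  exact intervalIntegral.integral_Iic_sub_Iic stdPDF_integrable.integrableOn
    stdPDF_integrable.integrableOn

lemma stdPDF_neg (x : ℝ) : stdPDF (-x) = stdPDF x := by
  unfold stdPDF; rw [neg_sq]

lemma key_ineq (u : ℝ) (hu : 0 ≤ u) (t : ℝ) :
    stdCDF (t + u) - stdCDF (t - u) ≤ stdCDF u - stdCDF (-u) := by
  have hint : ∀ a b : ℝ, IntervalIntegrable stdPDF volume a b := fun a b =>
    stdPDF_integrable.intervalIntegrable
  rw [stdCDF_sub, stdCDF_sub]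
  suffices H : ∀ t : ℝ, 0 ≤ t →
      (∫ x in (t - u)..(t + u), stdPDF x) ≤ ∫ x in (-u)..u, stdPDF x by
    rcases le_or_gt 0 t with h | h
    · exact H t h
    · have hrefl : (∫ x in (t - u)..(t + u), stdPDF x)
          = ∫ x in ((-t) - u)..((-t) + u), stdPDF x := by
        rw [show (-t) - u = -(t + u) by ring, show (-t) + u = -(t - u) by ring,
          ← intervalIntegral.integral_comp_neg stdPDF]
        simp only [stdPDF_neg]
      rw [hrefl]
      exact H (-t) (by linarith)
  intro t ht
  have split1 : (∫ x in (-u)..u, stdPDF x) + ∫ x in u..(t + u), stdPDF x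
      = ∫ x in (-u)..(t + u), stdPDF x :=
    intervalIntegral.integral_add_adjacent_intervals (hint _ _) (hint _ _)
  have split2 : (∫ x in (-u)..(t - u), stdPDF x) + ∫ x in (t - u)..(t + u), stdPDF x
      = ∫ x in (-u)..(t + u), stdPDF x :=
    intervalIntegral.integral_add_adjacent_intervals (hint _ _) (hint _ _)
  have hcomp : (∫ x in u..(t + u), stdPDF x)
      = ∫ x in (-u)..(t - u), stdPDF (x + 2 * u) := by
    rw [intervalIntegral.integral_comp_add_right]
    congr 1 <;> ring
  have hshift : IntervalIntegrable (fun x => stdPDF (x + 2 * u)) volume (-u) (t - u) := by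
    have := (hint u (t + u)).comp_add_right (2 * u)
    simpa [show u - 2 * u = -u by ring, show t + u - 2 * u = t - u by ring] using this
  have hmono : (∫ x in (-u)..(t - u), stdPDF (x + 2 * u))
      ≤ ∫ x in (-u)..(t - u), stdPDF x := by
    apply intervalIntegral.integral_mono_on (by linarith) hshift (hint _ _)
    intro x hx
    unfold stdPDF
    have hx1 : -u ≤ x := hx.1
    have hpos : 0 < Real.sqrt (2 * Real.pi) := Real.sqrt_pos.mpr (by positivity)
    rw [div_le_div_iff_of_pos_right hpos, Real.exp_le_exp]
    nlinarith
  linarith [hcomp ▸ hmono]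

theorem youden_threshold_zero {n : ℕ} (μ₀ μ₁ : Fin n → ℝ) (hμ : μ₀ ≠ μ₁)
    (S Q L : Matrix (Fin n) (Fin n) ℝ)
    (hS : S.PosDef) (hQ : Q ∈ Matrix.orthogonalGroup (Fin n) ℝ)
    (hL : L.IsDiag) (hLpos : ∀ i, 0 < L i i)
    (hdecomp : S = Q * L * Qᵀ)
    (α γ : Fin n → ℝ) (β : ℝ)
    (hα : α = S⁻¹.mulVec (μ₁ - μ₀))
    (hβ : β = (1 / 2) * (μ₀ ⬝ᵥ S⁻¹.mulVec μ₀ - μ₁ ⬝ᵥ S⁻¹.mulVec μ₁))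
    (hγ : γ = (sqrtD L * Qᵀ).mulVec α)
    (FPR TPR : ℝ → ℝ)
    (hFPR : ∀ θ, FPR θ = 1 - stdCDF ((θ - (α ⬝ᵥ μ₀ + β)) / vnorm γ))
    (hTPR : ∀ θ, TPR θ = 1 - stdCDF ((θ - (α ⬝ᵥ μ₁ + β)) / vnorm γ)) :
    ∀ θ : ℝ, TPR θ - FPR θ ≤ TPR 0 - FPR 0 := by
  -- symmetry of S⁻¹
  have hSsymm : Sᵀ = S := by
    have := hS.isHermitian
    simpa [Matrix.IsHermitian, Matrix.conjTranspose_eq_transpose_of_trivial] using this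
  have hBsymm : (S⁻¹)ᵀ = S⁻¹ := by
    rw [Matrix.transpose_nonsing_inv, hSsymm]
  have hsymmdot : ∀ v w : Fin n → ℝ, v ⬝ᵥ S⁻¹.mulVec w = w ⬝ᵥ S⁻¹.mulVec v := by
    intro v w
    rw [Matrix.dotProduct_mulVec, ← Matrix.mulVec_transpose, hBsymm, dotProduct_comm]
  have e0 : α ⬝ᵥ μ₀ = μ₀ ⬝ᵥ S⁻¹.mulVec μ₁ - μ₀ ⬝ᵥ S⁻¹.mulVec μ₀ := by
    rw [hα, dotProduct_comm, Matrix.mulVec_sub, dotProduct_sub]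
  have e1 : α ⬝ᵥ μ₁ = μ₁ ⬝ᵥ S⁻¹.mulVec μ₁ - μ₁ ⬝ᵥ S⁻¹.mulVec μ₀ := by
    rw [hα, dotProduct_comm, Matrix.mulVec_sub, dotProduct_sub]
  have hsum : (α ⬝ᵥ μ₀ + β) + (α ⬝ᵥ μ₁ + β) = 0 := by
    rw [e0, e1, hβ]
    have := hsymmdot μ₀ μ₁
    linarith
  -- nonnegativity of α ⬝ᵥ (μ₁ - μ₀)
  have hnn : 0 ≤ α ⬝ᵥ μ₁ - α ⬝ᵥ μ₀ := by
    have hps := (hS.inv).posSemidef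
    have h2 := hps.dotProduct_mulVec_nonneg (μ₁ - μ₀)
    rw [e0, e1]
    have := hsymmdot μ₀ μ₁
    have hexp : star (μ₁ - μ₀) ⬝ᵥ S⁻¹.mulVec (μ₁ - μ₀)
        = μ₁ ⬝ᵥ S⁻¹.mulVec μ₁ - μ₁ ⬝ᵥ S⁻¹.mulVec μ₀
          - (μ₀ ⬝ᵥ S⁻¹.mulVec μ₁ - μ₀ ⬝ᵥ S⁻¹.mulVec μ₀) := by
      rw [star_trivial, Matrix.mulVec_sub, dotProduct_sub, sub_dotProduct,
        sub_dotProduct]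
      ring
    rw [hexp] at h2
    linarith
  intro θ
  rw [hFPR, hTPR, hFPR 0, hTPR 0]
  set c := vnorm γ with hc
  have hcn : 0 ≤ c := Real.sqrt_nonneg _
  set A0 := α ⬝ᵥ μ₀ + β with hA0
  set A1 := α ⬝ᵥ μ₁ + β with hA1
  have hA : A0 = -A1 := by linarith [hsum]
  have hA1nn : 0 ≤ A1 := by
    have : A1 - A0 = α ⬝ᵥ μ₁ - α ⬝ᵥ μ₀ := by rw [hA0, hA1]; ring
    linarith [hnn, hA ▸ (by linarith [hnn, this] : (0:ℝ) ≤ A1 - A0)]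
  have hu : 0 ≤ A1 / c := div_nonneg hA1nn hcn
  have hk := key_ineq (A1 / c) hu (θ / c)
  have e2 : (θ - A0) / c = θ / c + A1 / c := by rw [hA]; ring
  have e3 : (θ - A1) / c = θ / c - A1 / c := by ring
  have e4 : ((0:ℝ) - A0) / c = A1 / c := by rw [hA]; ring
  have e5 : ((0:ℝ) - A1) / c = -(A1 / c) := by ring
  rw [e2, e3, e4, e5]
  linarith
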